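/- Let R be a commutative ring and S a multiplicative subset of R. If R is a uniformly S-Noetherian ring with respect to s ∈ S, then the free module R^n is a uniformly S-Noetherian R-module with respect to s^n. -/

import Mathlib

/-- A submodule `N` is `s`-finite if there is a finitely generated submodule `F`
with `s N ⊆ F ⊆ N`. -/
def SFinSub {R M : Type*} [CommRing R] [AddCommGroup M] [Module R M]
    (s : R) (N : Submodule R M) : Prop :=
  ∃ F : Submodule R M, F.FG ∧ F ≤ N ∧ ∀ x ∈ N, s • x ∈ F

lemma SFinSub.map {R M M' : Type*} [CommRing R] [AddCommGroup M] [Module R M]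
    [AddCommGroup M'] [Module R M'] (ι : M →ₗ[R] M') {s : R} {N : Submodule R M}
    (h : SFinSub s N) : SFinSub s (N.map ι) := by
  obtain ⟨F, hFG, hle, hsm⟩ := h
  refine ⟨F.map ι, hFG.map ι, Submodule.map_mono hle, ?_⟩
  rintro x ⟨y, hy, rfl⟩
  exact ⟨s • y, hsm y hy, map_smul ι s y⟩

lemma SFinSub.key {R M P : Type*} [CommRing R] [AddCommGroup M] [Module R M]
    [AddCommGroup P] [Module R P] (f : M →ₗ[R] P) (s₁ s₂ : R)
    (hker : ∀ N : Submodule R M, N ≤ LinearMap.ker f → SFinSub s₁ N)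
    (hP : ∀ Q : Submodule R P, SFinSub s₂ Q)
    (N : Submodule R M) : SFinSub (s₁ * s₂) N := by
  obtain ⟨F₁, ⟨T, hT⟩, hF₁le, hF₁⟩ := hP (N.map f)
  -- choose lifts of elements of T
  have hTlift : ∀ y ∈ (T : Set P), ∃ x, x ∈ N ∧ f x = y := by
    intro y hy
    have : y ∈ N.map f := hF₁le (hT ▸ Submodule.subset_span hy)
    obtain ⟨x, hx, hfx⟩ := this
    exact ⟨x, hx, hfx⟩
  choose g hgN hgf using hTlift
  set G₁ : Submodule R M := Submodule.span R (Set.range fun y : T => g y y.2) with hG₁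
  have hG₁N : G₁ ≤ N := by
    rw [hG₁, Submodule.span_le]
    rintro _ ⟨y, rfl⟩; exact hgN y y.2
  have hF₁G₁ : F₁ ≤ G₁.map f := by
    rw [← hT, Submodule.span_le]
    intro y hy
    exact ⟨g y hy, Submodule.subset_span ⟨⟨y, hy⟩, rfl⟩, hgf y hy⟩
  obtain ⟨F₂, hF₂FG, hF₂le, hF₂⟩ := hker (N ⊓ LinearMap.ker f) inf_le_right
  refine ⟨G₁ ⊔ F₂, Submodule.FG.sup ⟨Set.Finite.toFinset (Set.finite_range _),
      by rw [Set.Finite.coe_toFinset]⟩ hF₂FG,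
    sup_le hG₁N (hF₂le.trans inf_le_left), ?_⟩
  intro x hx
  have h1 : f (s₂ • x) ∈ G₁.map f :=
    hF₁G₁ (by rw [map_smul]; exact hF₁ (f x) ⟨x, hx, rfl⟩)
  obtain ⟨z, hzG₁, hzf⟩ := h1
  have hdiff : s₂ • x - z ∈ N ⊓ LinearMap.ker f := by
    refine ⟨N.sub_mem (N.smul_mem s₂ hx) (hG₁N hzG₁), ?_⟩
    simp [LinearMap.mem_ker, map_sub, hzf]
  have h2 : s₁ • (s₂ • x - z) ∈ F₂ := hF₂ _ hdiff
  have : (s₁ * s₂) • x = s₁ • (s₂ • x - z) + s₁ • z := by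
    rw [smul_sub, mul_smul]; abel
  rw [this]
  exact Submodule.add_mem _ (Submodule.mem_sup_right h2)
    (Submodule.mem_sup_left (G₁.smul_mem s₁ hzG₁))

theorem pow_uniformly_S_noetherian
    {R : Type*} [CommRing R] (S : Submonoid R) (s : R) (hs : s ∈ S)
    (hR : ∀ I : Ideal R, SFinSub s I) (n : ℕ) :
    ∀ N : Submodule R (Fin n → R), SFinSub (s ^ n) N := by
  induction n with
  | zero =>
    intro N
    refine ⟨⊥, Submodule.fg_bot, bot_le, fun x hx => ?_⟩
    have : x = 0 := Subsingleton.elim x 0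
    simp [this]
  | succ n ih =>
    intro N
    set f : (Fin (n + 1) → R) →ₗ[R] R := LinearMap.proj 0 with hf
    set ι : (Fin n → R) →ₗ[R] (Fin (n + 1) → R) :=
      LinearMap.pi (Fin.cases 0 (fun j => LinearMap.proj j)) with hι
    have hrange : LinearMap.ker f = LinearMap.range ι := by
      ext x
      constructor
      · intro hx
        refine ⟨fun j => x j.succ, funext fun i => ?_⟩
        refine Fin.cases ?_ (fun j => ?_) i
        · simpa [hf, hι, LinearMap.pi_apply] using (LinearMap.mem_ker.mp hx).symm
        · simp [hι, LinearMap.pi_apply]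
      · rintro ⟨y, rfl⟩
        simp [hf, hι, LinearMap.mem_ker, LinearMap.pi_apply]
    have key := SFinSub.key f (s ^ n) s
      (fun N' hN' => by
        have heq : (N'.comap ι).map ι = N' := by
          rw [Submodule.map_comap_eq, ← hrange, inf_eq_right]
          exact hN'
        exact heq ▸ (ih (N'.comap ι)).map ι)
      hR N
    rwa [pow_succ]
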